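/- Let q be a prime power, m ≥ 1, and let g = (g_1,…,g_m) be a self-dual basis of F_{q^m} over F_q. Let G_k(g) be the Gabidulin code of length m and dimension k (1 ≤ k ≤ m−1), and for 0 ≤ s ≤ m−1 let Hull_s(G_k(g)) = G_k(g) ∩ G_k(g)^{⊥_s}, where the s-Galois dual is taken with respect to the form [x,y]_s = Σ_{i=1}^m x_i y_i^{q^s} on F_{q^m}^m. Then dim_{F_{q^m}} Hull_s(G_k(g)) = min{m−k, s} if 0 ≤ s ≤ k, and dim_{F_{q^m}} Hull_s(G_k(g)) = min{m−s, k} if k+1 ≤ s ≤ m−1. -/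

import Mathlib

open Finset Matrix

noncomputable section

/-- The Hamming weight of a vector: the number of nonzero coordinates. -/
def hwt {G : Type*} [Zero G] {κ : Type*} (x : κ → G) : ℕ := Set.ncard {i | x i ≠ 0}

/-- The linear code `C` has minimum Hamming weight `d`. -/
def minHWt {F : Type*} [Field F] {κ : Type*} (C : Submodule F (κ → F)) (d : ℕ) : Prop :=
  (∃ c ∈ C, c ≠ 0 ∧ hwt c = d) ∧ ∀ c ∈ C, c ≠ 0 → d ≤ hwt c

/-- The minimum Hamming weight (minimum distance) of a linear code. -/
def minDist {F : Type*} [Field F] {κ : Type*} (C : Submodule F (κ → F)) : ℕ :=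
  sInf (hwt '' {c | c ∈ C ∧ c ≠ 0})

/-- The Euclidean dual of a linear code. -/
def euclDual {F : Type*} [Field F] {ι : Type*} [Fintype ι] (C : Submodule F (ι → F)) :
    Submodule F (ι → F) where
  carrier := {x | ∀ c ∈ C, ∑ i, c i * x i = 0}
  add_mem' := by
    intro a b ha hb c hc
    simp only [Set.mem_setOf_eq] at *
    simp [Pi.add_apply, mul_add, Finset.sum_add_distrib, ha c hc, hb c hc]
  zero_mem' := by intro c hc; simp
  smul_mem' := by
    intro r a ha c hc
    simp only [Set.mem_setOf_eq] at *
    simp [Pi.smul_apply, smul_eq_mul, mul_left_comm, ← Finset.mul_sum, ha c hc]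

/-- The `s`-Galois dual of a linear code over a field of characteristic `p`:
`{x | ∀ c ∈ C, ∑ i, c i * (x i)^(p^s) = 0}`. -/
def sGaloisDual {F : Type*} [Field F] {ι : Type*} [Fintype ι]
    (p s : ℕ) [Fact p.Prime] [CharP F p] (C : Submodule F (ι → F)) :
    Submodule F (ι → F) where
  carrier := {x | ∀ c ∈ C, ∑ i, c i * x i ^ p ^ s = 0}
  add_mem' := by
    intro a b ha hb c hc
    simp only [Set.mem_setOf_eq] at *
    have h : ∀ i, ((a + b) i) ^ p ^ s = a i ^ p ^ s + b i ^ p ^ s := fun i => by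
      simpa using add_pow_char_pow (a i) (b i) p s
    calc ∑ i, c i * ((a + b) i) ^ p ^ s
        = ∑ i, (c i * a i ^ p ^ s + c i * b i ^ p ^ s) :=
          Finset.sum_congr rfl fun i _ => by rw [h i, mul_add]
      _ = 0 := by rw [Finset.sum_add_distrib, ha c hc, hb c hc, add_zero]
  zero_mem' := by
    intro c hc
    have hps : p ^ s ≠ 0 := pow_ne_zero _ (Nat.Prime.ne_zero Fact.out)
    simp [zero_pow hps]
  smul_mem' := by
    intro r a ha c hc
    simp only [Set.mem_setOf_eq] at *
    have h : ∀ i, ((r • a) i) ^ p ^ s = r ^ p ^ s * a i ^ p ^ s := fun i => by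
      simp [mul_pow]
    calc ∑ i, c i * ((r • a) i) ^ p ^ s
        = ∑ i, r ^ p ^ s * (c i * a i ^ p ^ s) :=
          Finset.sum_congr rfl fun i _ => by rw [h i]; ring
      _ = 0 := by rw [← Finset.mul_sum, ha c hc, mul_zero]

/-- The `s`-Galois hull of a linear code: `Hull_s(C) = C ∩ C^{⊥_s}`. -/
def sGaloisHull {F : Type*} [Field F] {ι : Type*} [Fintype ι]
    (p s : ℕ) [Fact p.Prime] [CharP F p] (C : Submodule F (ι → F)) :
    Submodule F (ι → F) :=
  C ⊓ sGaloisDual p s C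

/-- The matrix-product code `[C_1, …, C_l] A ⊆ F^{t·n}`: codewords are indexed by
`Fin t × Fin n`, with block `j` equal to `∑ u, A u j • c u` for codewords `c u ∈ C u`. -/
def matrixProductCode {F : Type*} [Field F] {n l t : ℕ}
    (C : Fin l → Submodule F (Fin n → F)) (A : Matrix (Fin l) (Fin t) F) :
    Submodule F (Fin t × Fin n → F) where
  carrier := {x | ∃ c : Fin l → Fin n → F, (∀ u, c u ∈ C u) ∧
      ∀ j i, x (j, i) = ∑ u, A u j * c u i}
  add_mem' := by
    rintro x y ⟨c, hc, hx⟩ ⟨c', hc', hy⟩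
    exact ⟨c + c', fun u => (C u).add_mem (hc u) (hc' u), fun j i => by
      simp [hx j i, hy j i, mul_add, Finset.sum_add_distrib]⟩
  zero_mem' := ⟨0, fun u => (C u).zero_mem, fun j i => by simp⟩
  smul_mem' := by
    rintro r x ⟨c, hc, hx⟩
    refine ⟨r • c, fun u => (C u).smul_mem r (hc u), fun j i => ?_⟩
    simp only [Pi.smul_apply, smul_eq_mul, hx j i, Finset.mul_sum]
    exact Finset.sum_congr rfl fun u _ => by ring

/-- `UA A i` : the code in `F^t` spanned by the first `i` rows of the matrix `A`. -/
def UA {F : Type*} [Field F] {l t : ℕ} (A : Matrix (Fin l) (Fin t) F) (i : ℕ) :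
    Submodule F (Fin t → F) :=
  Submodule.span F ((fun u : Fin l => A u) '' {u | (u : ℕ) < i})

/-- The Gabidulin code of dimension `k` associated to `g : Fin m → K`, over a field `K`
containing a subfield with `q` elements: the row span of the matrix `(g j ^ q ^ i)`. -/
def gabidulin {K : Type*} [Field K] (q : ℕ) {m : ℕ} (k : ℕ) (g : Fin m → K) :
    Submodule K (Fin m → K) :=
  Submodule.span K (Set.range fun i : Fin k => fun j => g j ^ q ^ (i : ℕ))


set_option maxHeartbeats 1000000

lemma trace_eq_sum_pow_aux {p a : ℕ} [Fact p.Prime] (ha : 0 < a)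
    {Fq K : Type*} [Field Fq] [Fintype Fq] [Field K] [Fintype K] [Algebra Fq K] [CharP K p]
    (hq : Fintype.card Fq = p ^ a)
    {m : ℕ} (hrank : Module.finrank Fq K = m) (x : K) :
    algebraMap Fq K (Algebra.trace Fq K x) =
      ∑ u ∈ Finset.range m, x ^ (Fintype.card Fq) ^ u := by
  set q := Fintype.card Fq with hqdef
  have hq1 : 1 < q := Fintype.one_lt_card
  have hcardK : Fintype.card K = q ^ m := by
    rw [← hrank]; exact Module.card_eq_pow_finrank
  -- Frobenius as an AlgEquiv
  have hcomm : ∀ c : Fq, (iterateFrobenius K p a) (algebraMap Fq K c) = algebraMap Fq K c := by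
    intro c
    rw [iterateFrobenius_def, ← map_pow, ← hq, FiniteField.pow_card]
  let φ₀ : K →ₐ[Fq] K := { iterateFrobenius K p a with commutes' := hcomm }
  have hφ₀ : Function.Bijective φ₀ :=
    Finite.injective_iff_bijective.mp (RingHom.injective (iterateFrobenius K p a))
  let φ : K ≃ₐ[Fq] K := AlgEquiv.ofBijective φ₀ hφ₀
  have hφ : ∀ y : K, φ y = y ^ q := by
    intro y
    show φ₀ y = y ^ q
    show iterateFrobenius K p a y = y ^ q
    rw [iterateFrobenius_def, hq]
  have hpow : ∀ (u : ℕ) (y : K), (φ ^ u) y = y ^ q ^ u := by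
    intro u
    induction u with
    | zero => intro y; simp
    | succ n ih =>
      intro y
      rw [pow_succ, AlgEquiv.mul_apply, ih (φ y), hφ, ← pow_mul, ← pow_succ']
  -- injectivity of u ↦ φ ^ u on Fin m
  have hfix : ∀ d : ℕ, 0 < d → d < m → ∃ y : K, y ^ q ^ d ≠ y := by
    intro d hd1 hdm
    by_contra hcon
    push_neg at hcon
    have hdeg : (Polynomial.X ^ q ^ d - Polynomial.X : Polynomial K).natDegree = q ^ d := by
      rw [hq, ← pow_mul]
      exact FiniteField.X_pow_card_pow_sub_X_natDegree_eq K
        (by positivity) (Fact.out (p := p.Prime)).one_lt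
    have hne : (Polynomial.X ^ q ^ d - Polynomial.X : Polynomial K) ≠ 0 := by
      rw [hq, ← pow_mul]
      exact FiniteField.X_pow_card_pow_sub_X_ne_zero K
        (by positivity) (Fact.out (p := p.Prime)).one_lt
    classical
    have hsub : Finset.univ ⊆ (Polynomial.X ^ q ^ d - Polynomial.X : Polynomial K).roots.toFinset := by
      intro y _
      rw [Multiset.mem_toFinset, Polynomial.mem_roots hne]
      simp [Polynomial.IsRoot, hcon y]
    have h1 : Fintype.card K ≤ q ^ d := by
      calc Fintype.card K = Finset.univ.card := (Finset.card_univ).symm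
        _ ≤ (Polynomial.X ^ q ^ d - Polynomial.X : Polynomial K).roots.toFinset.card :=
            Finset.card_le_card hsub
        _ ≤ Multiset.card (Polynomial.X ^ q ^ d - Polynomial.X : Polynomial K).roots :=
            Multiset.toFinset_card_le _
        _ ≤ (Polynomial.X ^ q ^ d - Polynomial.X : Polynomial K).natDegree :=
            Polynomial.card_roots' _
        _ = q ^ d := hdeg
    have h2 : q ^ d < q ^ m := Nat.pow_lt_pow_right hq1 hdm
    omega
  have hinj : Function.Injective (fun u : Fin m => φ ^ (u : ℕ)) := by
    have key : ∀ u v : Fin m, (u:ℕ) < (v:ℕ) → φ ^ (u:ℕ) ≠ φ ^ (v:ℕ) := by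
      intro u v hlt heq
      obtain ⟨y, hy⟩ := hfix ((v:ℕ) - (u:ℕ)) (by omega) (by omega)
      apply hy
      obtain ⟨z, hz⟩ := (φ ^ (u:ℕ)).surjective y
      have h1 : z ^ q ^ (v:ℕ) = z ^ q ^ (u:ℕ) := by rw [← hpow, ← hpow, ← heq]
      have h2 : y ^ q ^ ((v:ℕ)-(u:ℕ)) = z ^ q ^ (v:ℕ) := by
        have hyz : y = z ^ q ^ (u:ℕ) := by rw [← hpow, hz]
        rw [hyz, ← pow_mul, ← pow_add, Nat.add_sub_cancel' hlt.le]
      rw [h2, h1, ← hpow, hz]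
    intro u v huv
    simp only at huv
    by_contra hne
    rcases Nat.lt_or_ge (u:ℕ) (v:ℕ) with h | h
    · exact key u v h huv
    · have hlt : (v:ℕ) < (u:ℕ) := by
        rcases Nat.lt_or_ge (v:ℕ) (u:ℕ) with h' | h'
        · exact h'
        · exact absurd (Fin.ext (le_antisymm h h')).symm hne
      exact key v u hlt huv.symm
  have hbij : Function.Bijective (fun u : Fin m => φ ^ (u : ℕ)) := by
    rw [Fintype.bijective_iff_injective_and_card]
    refine ⟨hinj, ?_⟩
    rw [← Nat.card_eq_fintype_card (α := Gal(K/Fq)), IsGalois.card_aut_eq_finrank, hrank, Fintype.card_fin]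
  rw [_root_.trace_eq_sum_automorphisms]
  rw [← Fintype.sum_bijective _ hbij _ (fun σ => σ x) (fun u => rfl)]
  simp only [hpow]
  exact Fin.sum_univ_eq_sum_range (fun u => x ^ q ^ u) m

/-- (Hull dimension of Gabidulin codes, for a self-dual basis `g` of
`F_{q^m}` over `F_q` with `q = p^a` a prime power.)  The `s`-Galois form here is
`[x,y]_s = ∑ i, x i * y i ^ (q ^ s)`; since `q ^ s = p ^ (a*s)`, it is `sGaloisDual p (a*s)`.
Then `dim Hull_s(G_k(g)) = min (m-k) s` for `0 ≤ s ≤ k`, and `= min (m-s) k` for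
`k+1 ≤ s ≤ m-1`. -/
theorem gabidulin_galois_hull_dim
    {p a : ℕ} [Fact p.Prime] (ha : 0 < a)
    {Fq K : Type*} [Field Fq] [Fintype Fq] [Field K] [Fintype K] [Algebra Fq K] [CharP K p]
    (hq : Fintype.card Fq = p ^ a)
    {m : ℕ} (hrank : Module.finrank Fq K = m) (b : Module.Basis (Fin m) Fq K)
    (hsd : ∀ i j, Algebra.trace Fq K (b i * b j) = if i = j then 1 else 0)
    {k s : ℕ} (hk1 : 1 ≤ k) (hk2 : k ≤ m - 1) (hs : s ≤ m - 1) :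
    (s ≤ k →
      Module.finrank K
          (sGaloisHull p (a * s) (gabidulin (Fintype.card Fq) k (fun j => b j))) =
        min (m - k) s) ∧
    (k + 1 ≤ s →
      Module.finrank K
          (sGaloisHull p (a * s) (gabidulin (Fintype.card Fq) k (fun j => b j))) =
        min (m - s) k) := by
  classical
  set q := Fintype.card Fq with hqdef
  have hq1 : 1 < q := Fintype.one_lt_card
  have hm : 2 ≤ m := by omega
  have hqpow : ∀ n : ℕ, q ^ n = p ^ (a * n) := fun n => by rw [hq, ← pow_mul]
  have hcardK : Fintype.card K = q ^ m := by rw [← hrank]; exact Module.card_eq_pow_finrank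
  have hfrobm : ∀ x : K, x ^ q ^ m = x := by
    intro x; rw [← hcardK]; exact FiniteField.pow_card x
  have hinjpow : ∀ n : ℕ, Function.Injective fun x : K => x ^ q ^ n := by
    intro n
    have he : (fun x : K => x ^ q ^ n) = ⇑(iterateFrobenius K p (a*n)) := by
      funext x; rw [iterateFrobenius_def, hqpow]
    rw [he]; exact (iterateFrobenius K p (a*n)).injective
  have hsumpow : ∀ (f : Fin m → K) (n : ℕ),
      (∑ j, f j) ^ q ^ n = ∑ j, f j ^ q ^ n := by
    intro f n
    have := map_sum (iterateFrobenius K p (a*n)) f Finset.univ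
    simp only [iterateFrobenius_def] at this
    rw [hqpow n]
    exact this
  have hiter : ∀ (x : K) (d : ℕ), x ^ (q ^ m) ^ d = x := by
    intro x d
    induction d with
    | zero => simp
    | succ n ih => rw [pow_succ, pow_mul, ih, hfrobm]
  have hmodm : ∀ (x : K) (n : ℕ), x ^ q ^ n = x ^ q ^ (n % m) := by
    intro x n
    calc x ^ q ^ n = x ^ (q ^ (m * (n / m)) * q ^ (n % m)) := by
          rw [← pow_add, Nat.div_add_mod]
      _ = (x ^ (q ^ m) ^ (n / m)) ^ q ^ (n % m) := by rw [pow_mul, pow_mul]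
      _ = x ^ q ^ (n % m) := by rw [hiter]
  -- the rows
  set r : Fin m → (Fin m → K) := fun i j => b j ^ q ^ (i : ℕ) with hrdef
  have htr : ∀ x : K, algebraMap Fq K (Algebra.trace Fq K x) = ∑ u ∈ Finset.range m, x ^ q ^ u :=
    trace_eq_sum_pow_aux ha hq hrank
  set M : Matrix (Fin m) (Fin m) K := Matrix.of fun i j => r i j with hMdef
  have hMtM : Mᵀ * M = 1 := by
    ext i j
    have h2 : (Mᵀ * M) i j = ∑ u : Fin m, (b i * b j) ^ q ^ (u : ℕ) := by
      rw [Matrix.mul_apply]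
      refine Finset.sum_congr rfl fun u _ => ?_
      show M u i * M u j = _
      show r u i * r u j = _
      simp only [hrdef, mul_pow]
    rw [h2, Fin.sum_univ_eq_sum_range (fun u => (b i * b j) ^ q ^ u) m, ← htr, hsd i j,
      Matrix.one_apply]
    split_ifs <;> simp
  have hMMt : M * Mᵀ = 1 := mul_eq_one_comm.mp hMtM
  have horth : ∀ i l : Fin m, ∑ j, r i j * r l j = if i = l then 1 else 0 := by
    intro i l
    have h : (M * Mᵀ) i l = (1 : Matrix (Fin m) (Fin m) K) i l := by rw [hMMt]
    rw [Matrix.mul_apply, Matrix.one_apply] at h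
    exact h
  have hLI : LinearIndependent K r := by
    rw [Fintype.linearIndependent_iff]
    intro c hc t
    have hcj : ∀ j, ∑ i, c i * r i j = 0 := by
      intro j
      simpa using congrFun hc j
    calc c t = ∑ i, c i * (if i = t then 1 else 0) := by simp
      _ = ∑ i, c i * ∑ j, r i j * r t j :=
          Finset.sum_congr rfl fun i _ => by rw [horth]
      _ = ∑ i, ∑ j, c i * (r i j * r t j) := by
          exact Finset.sum_congr rfl fun i _ => by rw [Finset.mul_sum]
      _ = ∑ j, ∑ i, c i * (r i j * r t j) := Finset.sum_comm
      _ = ∑ j, (∑ i, c i * r i j) * r t j := by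
          refine Finset.sum_congr rfl fun j _ => ?_
          rw [Finset.sum_mul]
          exact Finset.sum_congr rfl fun i _ => (mul_assoc _ _ _).symm
      _ = 0 := by simp [hcj]
  haveI : Nonempty (Fin m) := ⟨⟨0, by omega⟩⟩
  have hcardfr : Fintype.card (Fin m) = Module.finrank K (Fin m → K) := by
    simp [Module.finrank_pi]
  set B : Module.Basis (Fin m) K (Fin m → K) := basisOfLinearIndependentOfCardEqFinrank hLI hcardfr
    with hBdef
  have hB : ⇑B = r := coe_basisOfLinearIndependentOfCardEqFinrank _ _
  have hrepr : ∀ (x : Fin m → K) (t : Fin m), ∑ j, x j * r t j = B.repr x t := by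
    intro x t
    have hx := B.sum_repr x
    have hxj : ∀ j, x j = ∑ u, B.repr x u * r u j := by
      intro j
      conv_lhs => rw [← hx]
      rw [Finset.sum_apply]
      simp [hB]
    calc ∑ j, x j * r t j = ∑ j, (∑ u, B.repr x u * r u j) * r t j :=
        Finset.sum_congr rfl fun j _ => by rw [← hxj j]
      _ = ∑ j, ∑ u, B.repr x u * (r u j * r t j) := by
          refine Finset.sum_congr rfl fun j _ => ?_
          rw [Finset.sum_mul]
          exact Finset.sum_congr rfl fun u _ => mul_assoc _ _ _
      _ = ∑ u, ∑ j, B.repr x u * (r u j * r t j) := Finset.sum_comm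
      _ = ∑ u, B.repr x u * ∑ j, r u j * r t j := by
          exact Finset.sum_congr rfl fun u _ => (Finset.mul_sum _ _ _).symm
      _ = ∑ u, B.repr x u * (if u = t then 1 else 0) :=
          Finset.sum_congr rfl fun u _ => by rw [horth]
      _ = B.repr x t := by simp
  have hspan : ∀ (S : Set (Fin m)) (x : Fin m → K),
      x ∈ Submodule.span K (r '' S) ↔ ∀ t ∉ S, B.repr x t = 0 := by
    intro S x
    rw [← hB, Module.Basis.mem_span_image]
    constructor
    · intro h t ht
      by_contra h0
      exact ht (h (Finset.mem_coe.mpr (Finsupp.mem_support_iff.mpr h0)))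
    · intro h t ht
      rw [Finset.mem_coe, Finsupp.mem_support_iff] at ht
      by_contra hts
      exact ht (h t hts)
  -- identify the Gabidulin code
  have hrange : (Set.range fun i : Fin k => fun j => (b j : K) ^ q ^ (i : ℕ)) =
      r '' {t : Fin m | (t : ℕ) < k} := by
    ext x
    constructor
    · rintro ⟨i, rfl⟩
      exact ⟨⟨(i : ℕ), by omega⟩, by simpa using i.isLt, rfl⟩
    · rintro ⟨t, ht, rfl⟩
      exact ⟨⟨(t : ℕ), ht⟩, rfl⟩
  have hgab : gabidulin q k (fun j => b j) =
      Submodule.span K (r '' {t : Fin m | (t : ℕ) < k}) := by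
    rw [gabidulin, hrange]
  -- key computation for one row
  have hkey : ∀ (x : Fin m → K) (t : Fin m),
      (∑ j, b j ^ q ^ (((t : ℕ) + s) % m) * x j ^ q ^ s) = (∑ j, x j * r t j) ^ q ^ s := by
    intro x t
    rw [hsumpow]
    refine Finset.sum_congr rfl fun j _ => ?_
    have h1 : (r t j) ^ q ^ s = b j ^ q ^ (((t : ℕ) + s) % m) := by
      show (b j ^ q ^ (t : ℕ)) ^ q ^ s = _
      rw [← pow_mul, ← pow_add, hmodm]
    rw [mul_pow, h1, mul_comm]
  have hrowiff : ∀ (x : Fin m → K) (t : Fin m),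
      ((∑ j, b j ^ q ^ (((t : ℕ) + s) % m) * x j ^ q ^ s) = 0) ↔ B.repr x t = 0 := by
    intro x t
    rw [hkey, ← hrepr, pow_eq_zero_iff (pow_ne_zero s (by omega : q ≠ 0))]
  -- the Galois dual, characterized by coordinates
  have hdualmem : ∀ x : Fin m → K,
      x ∈ sGaloisDual p (a * s) (gabidulin q k (fun j => b j)) ↔
        ∀ t : Fin m, ((t : ℕ) + s) % m < k → B.repr x t = 0 := by
    intro x
    have hxmem : x ∈ sGaloisDual p (a * s) (gabidulin q k (fun j => b j)) ↔
        ∀ c ∈ gabidulin q k (fun j => b j), ∑ j, c j * x j ^ p ^ (a * s) = 0 := Iff.rfl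
    rw [hxmem]
    constructor
    · intro h t ht
      rw [← hrowiff x t]
      have hgen : (fun j => b j ^ q ^ (((t : ℕ) + s) % m)) ∈ gabidulin q k (fun j => b j) := by
        rw [hgab]
        apply Submodule.subset_span
        exact ⟨⟨((t : ℕ) + s) % m, Nat.mod_lt _ (by omega)⟩, ht, rfl⟩
      have h2 := h _ hgen
      rw [← hqpow s] at h2
      exact h2
    · intro h c hc
      let L : (Fin m → K) →ₗ[K] K :=
        { toFun := fun c => ∑ j, c j * x j ^ p ^ (a * s)
          map_add' := by intro c d; simp [add_mul, Finset.sum_add_distrib]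
          map_smul' := by intro r c; simp [Finset.mul_sum, mul_assoc] }
      have hle : Submodule.span K (r '' {t : Fin m | (t : ℕ) < k}) ≤ LinearMap.ker L := by
        rw [Submodule.span_le]
        rintro _ ⟨t', ht', rfl⟩
        rw [SetLike.mem_coe, LinearMap.mem_ker]
        show ∑ j, r t' j * x j ^ p ^ (a * s) = 0
        have hts : (((((t' : ℕ) + (m - s)) % m : ℕ) : ℕ) + s) % m = (t' : ℕ) := by
          rw [Nat.mod_add_mod, Nat.add_assoc, Nat.sub_add_cancel (by omega : s ≤ m),
            Nat.add_mod_right, Nat.mod_eq_of_lt t'.isLt]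
        set t : Fin m := ⟨((t' : ℕ) + (m - s)) % m, Nat.mod_lt _ (by omega)⟩ with htdef
        have hts' : ((t : ℕ) + s) % m = (t' : ℕ) := hts
        have h3 := (hrowiff x t).mpr (h t (by rw [hts']; exact ht'))
        rw [hts'] at h3
        rw [← hqpow s]
        exact h3
      exact LinearMap.mem_ker.mp (hle (hgab ▸ hc))
  -- sets of indices
  set S1 : Set (Fin m) := {t : Fin m | (t : ℕ) < k} with hS1def
  set S2 : Set (Fin m) := {t : Fin m | ¬ (((t : ℕ) + s) % m < k)} with hS2def
  have hgabmem : ∀ x : Fin m → K,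
      x ∈ gabidulin q k (fun j => b j) ↔ ∀ t ∉ S1, B.repr x t = 0 := by
    intro x; rw [hgab]; exact hspan S1 x
  have hhull : sGaloisHull p (a * s) (gabidulin q k (fun j => b j)) =
      Submodule.span K (r '' (S1 ∩ S2)) := by
    ext x
    rw [sGaloisHull, Submodule.mem_inf, hgabmem, hdualmem, hspan]
    constructor
    · rintro ⟨h1, h2⟩ t ht
      by_cases h3 : (t : ℕ) < k
      · have h4 : t ∉ S2 := fun hc => ht ⟨h3, hc⟩
        rw [hS2def, Set.mem_setOf_eq, not_not] at h4
        exact h2 t h4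
      · exact h1 t h3
    · intro h
      constructor
      · intro t ht
        exact h t fun hc => ht hc.1
      · intro t ht
        refine h t fun hc => ?_
        exact hc.2 ht
  -- dimension count
  have hScard : r '' (S1 ∩ S2) = Set.range (fun t : ↥(S1 ∩ S2) => r (t : Fin m)) := by
    rw [Set.image_eq_range]
  have hfr : Module.finrank K
      (sGaloisHull p (a * s) (gabidulin q k (fun j => b j))) = Fintype.card ↥(S1 ∩ S2) := by
    rw [hhull, hScard]
    exact finrank_span_eq_card (hLI.comp _ Subtype.val_injective)
  -- count the set
  have hmodval : ∀ t : ℕ, t < m → (t + s) % m = if t + s < m then t + s else t + s - m := by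
    intro t ht
    split_ifs with h
    · exact Nat.mod_eq_of_lt h
    · rw [Nat.mod_eq_sub_mod (le_of_not_gt h)]
      exact Nat.mod_eq_of_lt (by omega)
  have hcount : Fintype.card ↥(S1 ∩ S2) = min k (m - s) - (k - s) := by
    have h1 : Fintype.card ↥(S1 ∩ S2) = (S1 ∩ S2).toFinset.card :=
      (Set.toFinset_card _).symm
    have himg : ((S1 ∩ S2).toFinset.image Fin.val) =
        (Finset.range m).filter (fun t => t < k ∧ k ≤ (t + s) % m) := by
      ext n
      simp only [Finset.mem_image, Finset.mem_filter, Finset.mem_univ, true_and,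
        Finset.mem_range]
      constructor
      · rintro ⟨t, ht, rfl⟩
        rw [Set.mem_toFinset, Set.mem_inter_iff, hS1def, hS2def, Set.mem_setOf_eq,
          Set.mem_setOf_eq] at ht
        exact ⟨t.isLt, ht.1, Nat.le_of_not_lt ht.2⟩
      · rintro ⟨hn, h1, h2⟩
        exact ⟨⟨n, hn⟩, Set.mem_toFinset.mpr ⟨h1, Nat.not_lt.mpr h2⟩, rfl⟩
    have hIco : (Finset.range m).filter (fun t => t < k ∧ k ≤ (t + s) % m) =
        Finset.Ico (k - s) (min k (m - s)) := by
      ext t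
      simp only [Finset.mem_filter, Finset.mem_range, Finset.mem_Ico, lt_min_iff]
      constructor
      · rintro ⟨htm, h1, h2⟩
        have hm2 := hmodval t htm
        split_ifs at hm2 <;> omega
      · rintro ⟨h1, h2, h3⟩
        have htm : t < m := by omega
        have hm2 := hmodval t htm
        split_ifs at hm2 <;> omega
    rw [h1, ← Finset.card_image_of_injective _ Fin.val_injective, himg, hIco,
      Nat.card_Ico]
  refine ⟨fun hsk => ?_, fun hks => ?_⟩ <;> rw [hfr, hcount] <;> omega


end
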